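/- For the deformed geodesic Hamiltonian T̃_a = T_a/μ_a with μ_a = 1 − λ(x^2+y^2), the function K̃_{a2} = p_x^2 + (k_1 x^2/2 + k_2/x^2) p_z^2 + 2 λ x^2 T̃_a Poisson-commutes with T̃_a on the open set where μ_a ≠ 0, x ≠ 0, y ≠ 0. -/

import Mathlib

/-- Canonical Poisson bracket on phase space ℝ³ × ℝ³ with coordinates (x,y,z,pₓ,p_y,p_z). -/
noncomputable def pb (F G : ℝ → ℝ → ℝ → ℝ → ℝ → ℝ → ℝ) (x y z px py pz : ℝ) : ℝ :=
    deriv (fun t => F t y z px py pz) x * deriv (fun t => G x y z t py pz) px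
  + deriv (fun t => F x t z px py pz) y * deriv (fun t => G x y z px t pz) py
  + deriv (fun t => F x y t px py pz) z * deriv (fun t => G x y z px py t) pz
  - deriv (fun t => F x y z t py pz) px * deriv (fun t => G t y z px py pz) x
  - deriv (fun t => F x y z px t pz) py * deriv (fun t => G x t z px py pz) y
  - deriv (fun t => F x y z px py t) pz * deriv (fun t => G x y t px py pz) z

noncomputable def Va (k1 k2 k3 : ℝ) (x y : ℝ) : ℝ :=
  (1/2)*k1*(x^2+y^2) + k2/x^2 + k3/y^2

noncomputable def Tta (lam k1 k2 k3 : ℝ) : ℝ → ℝ → ℝ → ℝ → ℝ → ℝ → ℝ :=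
  fun x y _ px py pz =>
    ((1/2) * (px^2 + py^2 + Va k1 k2 k3 x y * pz^2)) / (1 - lam*(x^2+y^2))

set_option maxHeartbeats 2000000 in
theorem stmt_9 (lam k1 k2 k3 : ℝ) (x y z px py pz : ℝ)
    (hmu : 1 - lam*(x^2+y^2) ≠ 0) (hx : x ≠ 0) (hy : y ≠ 0) :
    pb (Tta lam k1 k2 k3)
       (fun x y z' px py pz =>
          px^2 + (k1*x^2/2 + k2/x^2) * pz^2
            + 2*lam*x^2 * Tta lam k1 k2 k3 x y z' px py pz)
       x y z px py pz = 0 := by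
  simp only [pb, Tta, Va]
  have hsx : HasDerivAt (fun t : ℝ => t^2) (2*x) x := by simpa using hasDerivAt_pow 2 x
  have hsy : HasDerivAt (fun t : ℝ => t^2) (2*y) y := by simpa using hasDerivAt_pow 2 y
  have hspx : HasDerivAt (fun t : ℝ => t^2) (2*px) px := by simpa using hasDerivAt_pow 2 px
  have hspy : HasDerivAt (fun t : ℝ => t^2) (2*py) py := by simpa using hasDerivAt_pow 2 py
  have hspz : HasDerivAt (fun t : ℝ => t^2) (2*pz) pz := by simpa using hasDerivAt_pow 2 pz
  -- F slice in x
  have hVx := (((hsx.add_const (y^2)).const_mul (1/2*k1)).add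
      ((hsx.inv (pow_ne_zero 2 hx)).const_mul k2)).add_const (k3/y^2)
  have hNx := ((hVx.mul_const (pz^2)).const_add (px^2+py^2)).const_mul (1/2:ℝ)
  have hDx := ((hsx.add_const (y^2)).const_mul lam).const_sub 1
  have HFx := hNx.div hDx hmu
  -- F slice in y
  have hVy := ((((hsy.const_add (x^2)).const_mul (1/2*k1)).add_const (k2/x^2)).add
      ((hsy.inv (pow_ne_zero 2 hy)).const_mul k3))
  have hNy := ((hVy.mul_const (pz^2)).const_add (px^2+py^2)).const_mul (1/2:ℝ)
  have hDy := ((hsy.const_add (x^2)).const_mul lam).const_sub 1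
  have HFy := hNy.div hDy hmu
  -- F slices in momenta
  have HFpx := ((((hspx.add_const (py^2)).add_const
      ((1/2*k1*(x^2+y^2)+k2/x^2+k3/y^2)*pz^2)).const_mul (1/2:ℝ)).div_const
      (1 - lam*(x^2+y^2)))
  have HFpy := ((((hspy.const_add (px^2)).add_const
      ((1/2*k1*(x^2+y^2)+k2/x^2+k3/y^2)*pz^2)).const_mul (1/2:ℝ)).div_const
      (1 - lam*(x^2+y^2)))
  have HFpz := ((((hspz.const_mul (1/2*k1*(x^2+y^2)+k2/x^2+k3/y^2)).const_add
      (px^2+py^2)).const_mul (1/2:ℝ)).div_const (1 - lam*(x^2+y^2)))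
  -- G slice in x
  have HGx := ((((((hsx.const_mul k1).div_const 2).add
      ((hsx.inv (pow_ne_zero 2 hx)).const_mul k2)).mul_const (pz^2)).const_add
      (px^2)).add ((hsx.const_mul (2*lam)).mul HFx))
  -- G slice in y
  have HFy' : HasDerivAt (fun t : ℝ =>
      1/2*(px^2+py^2+(1/2*k1*(x^2+t^2)+k2/x^2+k3/t^2)*pz^2)/(1-lam*(x^2+t^2))) _ y := HFy
  have HGy := (HFy'.const_mul (2*lam*x^2)).const_add
      (px^2 + (k1*x^2/2 + k2/x^2)*pz^2)
  -- G slices in momenta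
  have HGpx := (hspx.add_const ((k1*x^2/2 + k2/x^2)*pz^2)).add
      (HFpx.const_mul (2*lam*x^2))
  have HGpy := (HFpy.const_mul (2*lam*x^2)).const_add
      (px^2 + (k1*x^2/2 + k2/x^2)*pz^2)
  have HGpz := ((hspz.const_mul (k1*x^2/2 + k2/x^2)).const_add (px^2)).add
      (HFpz.const_mul (2*lam*x^2))
  have HFx' : HasDerivAt (fun t : ℝ =>
      1/2*(px^2+py^2+(1/2*k1*(t^2+y^2)+k2/t^2+k3/y^2)*pz^2)/(1-lam*(t^2+y^2))) _ x := HFx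
  have HFy' : HasDerivAt (fun t : ℝ =>
      1/2*(px^2+py^2+(1/2*k1*(x^2+t^2)+k2/x^2+k3/t^2)*pz^2)/(1-lam*(x^2+t^2))) _ y := HFy
  have HGx' : HasDerivAt (fun t : ℝ =>
      px^2 + (k1*t^2/2 + k2/t^2)*pz^2 + 2*lam*t^2*
        (1/2*(px^2+py^2+(1/2*k1*(t^2+y^2)+k2/t^2+k3/y^2)*pz^2)/(1-lam*(t^2+y^2)))) _ x := HGx
  have HGpx' : HasDerivAt (fun t : ℝ =>
      t^2 + (k1*x^2/2 + k2/x^2)*pz^2 + 2*lam*x^2*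
        (1/2*(t^2+py^2+(1/2*k1*(x^2+y^2)+k2/x^2+k3/y^2)*pz^2)/(1-lam*(x^2+y^2)))) _ px := HGpx
  have HGpz' : HasDerivAt (fun t : ℝ =>
      px^2 + (k1*x^2/2 + k2/x^2)*t^2 + 2*lam*x^2*
        (1/2*(px^2+py^2+(1/2*k1*(x^2+y^2)+k2/x^2+k3/y^2)*t^2)/(1-lam*(x^2+y^2)))) _ pz := HGpz
  rw [HFx'.deriv, HFy'.deriv, HFpx.deriv, HFpy.deriv, HFpz.deriv,
      HGx'.deriv, HGy.deriv, HGpx'.deriv, HGpy.deriv, HGpz'.deriv,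
      deriv_const, deriv_const]
  simp only [Pi.add_apply, Pi.div_apply, Pi.inv_apply]
  field_simp
  ring
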